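/- Let Q and P be probability measures on a measurable space Θ with Q absolutely continuous with respect to P, and let f : Θ → ℝ be bounded measurable. Then E_Q[f] ≤ KL(Q ‖ P) + log E_P[exp(f)]. -/

import Mathlib

open MeasureTheory Real
open scoped Classical

/-- KL divergence, valued in `EReal`: the expected log-likelihood ratio when it
is well defined (absolute continuity and integrability), and `⊤` otherwise. -/
noncomputable def klDiv {Θ : Type*} [MeasurableSpace Θ] (Q P : Measure Θ) : EReal :=
  if Q ≪ P ∧ Integrable (llr Q P) Q then ((∫ x, llr Q P x ∂Q : ℝ) : EReal) else ⊤

lemma integral_llr_nonneg_aux {Θ : Type*} [MeasurableSpace Θ]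
    (Q P : Measure Θ) [IsProbabilityMeasure Q] [IsProbabilityMeasure P]
    (hQP : Q ≪ P) (h_int : Integrable (llr Q P) Q) :
    0 ≤ ∫ x, llr Q P x ∂Q := by
  have h_eq : (fun x ↦ exp (- llr Q P x)) =ᵐ[Q] fun x ↦ (P.rnDeriv Q x).toReal :=
    exp_neg_llr hQP
  have h_int_exp : Integrable (fun x ↦ exp (- llr Q P x)) Q :=
    (integrable_congr h_eq).mpr Measure.integrable_toReal_rnDeriv
  have h1 : ∫ x, exp (- llr Q P x) ∂Q ≤ 1 := by
    rw [integral_congr_ae h_eq]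
    calc ∫ x, (P.rnDeriv Q x).toReal ∂Q
        = ∫ x in Set.univ, (P.rnDeriv Q x).toReal ∂Q := by rw [setIntegral_univ]
      _ ≤ (P Set.univ).toReal := Measure.setIntegral_toReal_rnDeriv_le (measure_ne_top P _)
      _ = 1 := by simp
  have h2 : ∫ x, - llr Q P x ∂Q ≤ ∫ x, (exp (- llr Q P x) - 1) ∂Q := by
    refine integral_mono h_int.neg (h_int_exp.sub (integrable_const 1)) fun x ↦ ?_
    have := Real.add_one_le_exp (- llr Q P x)
    linarith
  rw [integral_neg, integral_sub h_int_exp (integrable_const 1)] at h2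
  simp only [integral_const, measure_univ, probReal_univ, ENNReal.toReal_one, smul_eq_mul, one_mul] at h2
  linarith

theorem donsker_varadhan_ineq {Θ : Type*} [MeasurableSpace Θ]
    (Q P : Measure Θ) [IsProbabilityMeasure Q] [IsProbabilityMeasure P]
    (hQP : Q ≪ P)
    (f : Θ → ℝ) (hf : Measurable f) (C : ℝ) (hbdd : ∀ x, |f x| ≤ C) :
    ((∫ x, f x ∂Q : ℝ) : EReal) ≤
      klDiv Q P + ((Real.log (∫ x, exp (f x) ∂P) : ℝ) : EReal) := by
  by_cases h_int : Integrable (llr Q P) Q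
  · rw [klDiv, if_pos ⟨hQP, h_int⟩, ← EReal.coe_add, EReal.coe_le_coe_iff]
    -- integrability facts
    have hfQ : Integrable f Q :=
      (integrable_const C).mono' hf.aestronglyMeasurable (ae_of_all _ hbdd)
    have hexpP : Integrable (fun x ↦ exp (f x)) P := by
      refine (integrable_const (exp C)).mono' (hf.exp).aestronglyMeasurable (ae_of_all _ fun x ↦ ?_)
      rw [Real.norm_eq_abs, abs_of_pos (exp_pos _)]
      exact exp_le_exp.mpr ((abs_le.mp (hbdd x)).2)
    have hP0 : NeZero P := ⟨IsProbabilityMeasure.ne_zero P⟩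
    have hPtilt : IsProbabilityMeasure (P.tilted f) := isProbabilityMeasure_tilted hexpP
    have hQtilt : Q ≪ P.tilted f := hQP.trans (absolutelyContinuous_tilted hexpP)
    have h_int_tilt : Integrable (llr Q (P.tilted f)) Q :=
      integrable_llr_tilted_right hQP hfQ h_int hexpP
    have h0 : (0 : ℝ) ≤ ∫ x, llr Q (P.tilted f) x ∂Q :=
      integral_llr_nonneg_aux Q (P.tilted f) hQtilt h_int_tilt
    rw [integral_llr_tilted_right hQP hfQ hexpP h_int] at h0
    linarith
  · rw [klDiv, if_neg (by tauto), EReal.top_add_of_ne_bot (by exact EReal.coe_ne_bot _)]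
    exact le_top
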